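/- Let w ≥ 1 and let (μ_{1,t}) and (μ_{2,t}) be sequences each with per-step drift at most δ. Set s = t' − 2w + 1 and suppose (1/(2w))·Σ_{t=s}^{t'} (μ_{1,t} − μ_{2,t}) ≥ λ. Then the interleaved averages satisfy (1/w)·Σ_{i=0}^{w−1} μ_{1,s+2i} − (1/w)·Σ_{i=0}^{w−1} μ_{2,s+2i+1} ≥ λ − δ. -/

import Mathlib

open Finset

lemma pair_sum_aux (g : ℕ → ℝ) (w : ℕ) :
    ∑ j ∈ range (2*w), g j = ∑ i ∈ range w, (g (2*i) + g (2*i+1)) := by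
  induction w with
  | zero => simp
  | succ n ih =>
    have h2 : 2 * (n+1) = (2*n + 1) + 1 := by ring
    rw [h2, sum_range_succ, sum_range_succ, ih, sum_range_succ]
    ring

/-- If the average gap between the two arms' means over a window of 2w consecutive steps
ending at t' is at least λ, and each arm drifts by at most δ per step, then the
round-robin (interleaved) sampled averages differ by at least λ − δ. -/
theorem stmt_5 (μ₁ μ₂ : ℕ → ℝ) (δ lam : ℝ) (hδ : 0 < δ) (w : ℕ) (hw : 1 ≤ w)
    (hd1 : ∀ t : ℕ, |μ₁ t - μ₁ (t+1)| ≤ δ)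
    (hd2 : ∀ t : ℕ, |μ₂ t - μ₂ (t+1)| ≤ δ)
    (t' s : ℕ) (hs : s = t' - (2*w - 1)) (hts : 2*w - 1 ≤ t')
    (havg : (1 / (2*(w:ℝ))) * ∑ t ∈ Icc s t', (μ₁ t - μ₂ t) ≥ lam) :
    (1 / (w:ℝ)) * ∑ i ∈ range w, μ₁ (s + 2*i)
      - (1 / (w:ℝ)) * ∑ i ∈ range w, μ₂ (s + 2*i + 1) ≥ lam - δ := by
  have hwpos : (0:ℝ) < (w:ℝ) := by exact_mod_cast hw
  have hlen : t' + 1 - s = 2*w := by omega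
  have hsum : ∑ t ∈ Icc s t', (μ₁ t - μ₂ t)
      = ∑ j ∈ range (2*w), (μ₁ (s+j) - μ₂ (s+j)) := by
    have : Icc s t' = Ico s (t'+1) := by rw [Finset.Ico_add_one_right_eq_Icc]
    rw [this, Finset.sum_Ico_eq_sum_range]
    have h2 : t' + 1 - s = 2*w := hlen
    rw [h2]
  have hpair : ∑ j ∈ range (2*w), (μ₁ (s+j) - μ₂ (s+j))
      = ∑ i ∈ range w, ((μ₁ (s+2*i) - μ₂ (s+2*i)) + (μ₁ (s+(2*i+1)) - μ₂ (s+(2*i+1)))) := by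
    exact pair_sum_aux (fun j => μ₁ (s+j) - μ₂ (s+j)) w
  have hbound : ∑ i ∈ range w, ((μ₁ (s+2*i) - μ₂ (s+2*i)) + (μ₁ (s+(2*i+1)) - μ₂ (s+(2*i+1))))
      ≤ ∑ i ∈ range w, (2*μ₁ (s+2*i) - 2*μ₂ (s+2*i+1) + 2*δ) := by
    apply sum_le_sum
    intro i _
    have h1 := abs_le.mp (hd1 (s+2*i))
    have h2 := abs_le.mp (hd2 (s+2*i))
    have e : s + 2*i + 1 = s + (2*i+1) := by omega
    rw [e] at h1 h2 ⊢
    linarith [h1.1, h1.2, h2.1, h2.2]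
  have hsum2 : ∑ i ∈ range w, (2*μ₁ (s+2*i) - 2*μ₂ (s+2*i+1) + 2*δ)
      = 2 * (∑ i ∈ range w, μ₁ (s+2*i)) - 2 * (∑ i ∈ range w, μ₂ (s+2*i+1)) + 2*δ*w := by
    rw [sum_add_distrib, sum_sub_distrib, ← mul_sum, ← mul_sum, sum_const, card_range]
    push_cast; ring
  set A := ∑ i ∈ range w, μ₁ (s+2*i)
  set B := ∑ i ∈ range w, μ₂ (s+2*i+1)
  have key : 2*(w:ℝ)*lam ≤ 2*A - 2*B + 2*δ*w := by
    have h0 : 2*(w:ℝ)*lam ≤ ∑ t ∈ Icc s t', (μ₁ t - μ₂ t) := by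
      have h2w : (0:ℝ) < 2*(w:ℝ) := by linarith
      have hm := mul_le_mul_of_nonneg_left havg h2w.le
      have heq : (2*(w:ℝ)) * (1/(2*(w:ℝ)) * ∑ t ∈ Icc s t', (μ₁ t - μ₂ t)) = ∑ t ∈ Icc s t', (μ₁ t - μ₂ t) := by
        field_simp
      linarith
    calc 2*(w:ℝ)*lam ≤ ∑ t ∈ Icc s t', (μ₁ t - μ₂ t) := h0
      _ ≤ 2*A - 2*B + 2*δ*w := by rw [hsum, hpair]; exact le_of_le_of_eq hbound hsum2
  rw [ge_iff_le, ← sub_nonneg]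
  have : (1/(w:ℝ)) * A - (1/(w:ℝ)) * B - (lam - δ) = (2*A - 2*B + 2*δ*w - 2*w*lam) / (2*w) := by
    field_simp; ring
  rw [this]
  apply div_nonneg (by linarith) (by linarith)
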